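/- Fix c ∈ ℂ. Suppose S(x), S̃(x) ∈ M(r,d) both satisfy the normal form conditions at c: in block notation, u(c) = ν, T(c) = τ, and the first row of the coefficient of (x−c)¹ in the expansion of T(x) in powers of (x−c) is zero. If g(x) ∈ G_r satisfies g(x)⁻¹S(x)g(x) = S̃(x), then g(x) = I_r (and hence S(x) = S̃(x)). -/
import Mathlib

open Polynomial Matrix

noncomputable section

/-- The space `M(r,d)` of polynomial matrices, with `r = n+2`. -/
def Mrd (n d : ℕ) (A : Matrix (Fin (n+2)) (Fin (n+2)) (Polynomial ℂ)) : Prop :=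
  (A 0 0).degree ≤ (d : WithBot ℕ) ∧
  (∀ j : Fin (n+1), (A 0 j.succ).degree ≤ ((d+1 : ℕ) : WithBot ℕ)) ∧
  (∀ i : Fin (n+1), (A i.succ 0).degree ≤ ((d-1 : ℕ) : WithBot ℕ)) ∧
  (∀ i j : Fin (n+1), (A i.succ j.succ).degree ≤ (d : WithBot ℕ))

/-- The group `G_r`, `r = n+2`: block form `[[1, ᵗb₁x + ᵗb₀],[0, B]]` with `B ∈ GL_{r-1}(ℂ)`. -/
def Gr (n : ℕ) (g : Matrix (Fin (n+2)) (Fin (n+2)) (Polynomial ℂ)) : Prop :=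
  g 0 0 = 1 ∧
  (∀ i : Fin (n+1), g i.succ 0 = 0) ∧
  (∀ j : Fin (n+1), (g 0 j.succ).degree ≤ 1) ∧
  (∀ i j : Fin (n+1), (g i.succ j.succ).degree ≤ 0) ∧
  IsUnit g.det

/-- The block `u(x)` of `A(x)`. -/
def blkU (n : ℕ) (A : Matrix (Fin (n+2)) (Fin (n+2)) (Polynomial ℂ)) :
    Fin (n+1) → Polynomial ℂ := fun i => A i.succ 0

/-- The block `T(x)` of `A(x)`. -/
def blkT (n : ℕ) (A : Matrix (Fin (n+2)) (Fin (n+2)) (Polynomial ℂ)) :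
    Matrix (Fin (n+1)) (Fin (n+1)) (Polynomial ℂ) := Matrix.of fun i j => A i.succ j.succ

/-- `D(A(x); x) = (u(x), T(x)u(x), …, T(x)^{r−2}u(x))`. -/
def Dmat (n : ℕ) (A : Matrix (Fin (n+2)) (Fin (n+2)) (Polynomial ℂ)) :
    Matrix (Fin (n+1)) (Fin (n+1)) (Polynomial ℂ) :=
  Matrix.of fun i j => ((blkT n A ^ (j : ℕ)) *ᵥ blkU n A) i

/-- `D(A(x); c)`, evaluation at `x = c`. -/
def Dc (n : ℕ) (A : Matrix (Fin (n+2)) (Fin (n+2)) (Polynomial ℂ)) (c : ℂ) :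
    Matrix (Fin (n+1)) (Fin (n+1)) ℂ :=
  (Dmat n A).map (eval c)

/-- The lower shift matrix `τ`. -/
def tauMat (n : ℕ) : Matrix (Fin (n+1)) (Fin (n+1)) ℂ :=
  Matrix.of fun i j => if (i : ℕ) = (j : ℕ) + 1 then 1 else 0

/-- The vector `ν = ᵗ(1,0,…,0)`. -/
def nuVec (n : ℕ) : Fin (n+1) → ℂ := fun i => if (i : ℕ) = 0 then 1 else 0


/-- Normal form conditions at `c`: `u(c) = ν`, `T(c) = τ`, and the first row of the
coefficient of `(x−c)¹` in the expansion of `T(x)` in powers of `(x−c)` vanishes. -/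
def NormalFormAt (n : ℕ) (c : ℂ)
    (S : Matrix (Fin (n+2)) (Fin (n+2)) (Polynomial ℂ)) : Prop :=
  (∀ i : Fin (n+1), eval c (blkU n S i) = nuVec n i) ∧
  ((blkT n S).map (eval c) = tauMat n) ∧
  (∀ j : Fin (n+1), eval c (derivative (blkT n S 0 j)) = 0)

/- ### Auxiliary lemmas -/

lemma deriv_eq_zero_of_deg_le_one {p : Polynomial ℂ} (h : p.degree ≤ 1) (c : ℂ)
    (h2 : eval c (derivative p) = 0) : derivative p = 0 := by
  have hd : (derivative p).degree ≤ 0 := by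
    rw [Polynomial.degree_le_iff_coeff_zero]
    intro m hm
    have hm' : 0 < m := by exact_mod_cast hm
    rw [Polynomial.coeff_derivative]
    have hc : p.coeff (m+1) = 0 :=
      (Polynomial.degree_le_iff_coeff_zero p 1).1 h (m+1) (by exact_mod_cast by omega)
    simp [hc]
  have he := Polynomial.eq_C_of_degree_le_zero hd
  rw [he] at h2 ⊢
  simp at h2
  simp [h2]

lemma eq_zero_of_deg_le_one {p : Polynomial ℂ} (h : p.degree ≤ 1) (c : ℂ)
    (h1 : eval c p = 0) (h2 : eval c (derivative p) = 0) : p = 0 := by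
  have hder := deriv_eq_zero_of_deg_le_one h c h2
  have hc1 : p.coeff 1 = 0 := by
    have hh := Polynomial.coeff_derivative p 0
    rw [hder] at hh
    simpa using hh.symm
  have hd : p.degree ≤ 0 := by
    rw [Polynomial.degree_le_iff_coeff_zero]
    intro m hm
    have hm' : 0 < m := by exact_mod_cast hm
    rcases Nat.lt_or_ge m 2 with h2' | h2'
    · interval_cases m
      · exact hc1
    · exact (Polynomial.degree_le_iff_coeff_zero p 1).1 h m (by exact_mod_cast by omega)
  have he := Polynomial.eq_C_of_degree_le_zero hd
  rw [he] at h1 ⊢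
  simp at h1
  simp [h1]

lemma sum_tau_left (n : ℕ) (i : Fin (n+1)) (f : Fin (n+1) → ℂ) :
    ∑ k, tauMat n i k * f k =
      if h : (i:ℕ) ≠ 0 then f ⟨(i:ℕ)-1, by omega⟩ else 0 := by
  by_cases h : (i:ℕ) = 0
  · rw [dif_neg (by simpa using h)]
    apply Finset.sum_eq_zero
    intro k _
    simp [tauMat, h]
  · rw [dif_pos h]
    rw [Finset.sum_eq_single (⟨(i:ℕ)-1, by omega⟩ : Fin (n+1))]
    · simp [tauMat]
      intro hcon
      exfalso; apply hcon; omega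
    · intro k _ hk
      have hne : (i:ℕ) ≠ (k:ℕ)+1 := by
        intro hc
        apply hk
        apply Fin.ext
        simp
        omega
      simp [tauMat, hne]
    · simp

lemma sum_tau_right (n : ℕ) (j : Fin (n+1)) (f : Fin (n+1) → ℂ) :
    ∑ k, f k * tauMat n k j =
      if h : (j:ℕ)+1 < n+1 then f ⟨(j:ℕ)+1, h⟩ else 0 := by
  by_cases h : (j:ℕ)+1 < n+1
  · rw [dif_pos h]
    rw [Finset.sum_eq_single (⟨(j:ℕ)+1, h⟩ : Fin (n+1))]
    · simp [tauMat]
    · intro k _ hk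
      have hne : (k:ℕ) ≠ (j:ℕ)+1 := by
        intro hc
        apply hk
        apply Fin.ext
        simpa using hc
      simp [tauMat, hne]
    · simp
  · rw [dif_neg h]
    apply Finset.sum_eq_zero
    intro k _
    have hne : (k:ℕ) ≠ (j:ℕ)+1 := by omega
    simp [tauMat, hne]

lemma key_combinatorial (n : ℕ) (B : Matrix (Fin (n+1)) (Fin (n+1)) ℂ) (β : Fin (n+1) → ℂ)
    (hcol : ∀ i, B i 0 = nuVec n i)
    (hE : ∀ i j, nuVec n i * β j + ∑ k, tauMat n i k * B k j = ∑ k, B i k * tauMat n k j) :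
    (∀ i j, B i j = if i = j then 1 else 0) ∧ (∀ j, β j = 0) := by
  set b : ℕ → ℕ → ℂ := fun i j => if h : i < n+1 ∧ j < n+1 then B ⟨i,h.1⟩ ⟨j,h.2⟩ else 0 with hbdef
  have e1 : ∀ (i : ℕ) (hi : i < n+1) (j : ℕ) (hj : j < n+1), b i j = B ⟨i,hi⟩ ⟨j,hj⟩ := by
    intro i hi j hj
    simp only [hbdef]
    rw [dif_pos ⟨hi, hj⟩]
  have e0 : ∀ (i j : ℕ), ¬ (i < n+1 ∧ j < n+1) → b i j = 0 := by
    intro i j hij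
    simp only [hbdef]
    rw [dif_neg hij]
  have hrec : ∀ i j : ℕ, i < n → j < n + 1 → b (i+1) (j+1) = b i j := by
    intro i j hi hj
    have h := hE ⟨i+1, by omega⟩ ⟨j, hj⟩
    rw [sum_tau_left, sum_tau_right] at h
    rw [dif_pos (show ((⟨i+1, by omega⟩ : Fin (n+1)) : ℕ) ≠ 0 by simp)] at h
    have hnu : nuVec n ⟨i+1, by omega⟩ = 0 := by simp [nuVec]
    rw [hnu, zero_mul, zero_add] at h
    have h' : B ⟨i, by omega⟩ ⟨j, hj⟩
        = if hj1 : j + 1 < n + 1 then B ⟨i+1, by omega⟩ ⟨j+1, hj1⟩ else 0 := h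
    by_cases hj1 : j + 1 < n + 1
    · rw [dif_pos hj1] at h'
      rw [e1 (i+1) (by omega) (j+1) hj1, e1 i (by omega) j hj, h']
    · rw [dif_neg hj1] at h'
      rw [e0 (i+1) (j+1) (by omega), e1 i (by omega) j hj, h']
  have hβb : ∀ j : Fin (n+1), β j = b 0 ((j:ℕ)+1) := by
    intro j
    have h := hE 0 j
    rw [sum_tau_left, sum_tau_right] at h
    rw [dif_neg (by simp)] at h
    have hnu : nuVec n 0 = 1 := by simp [nuVec]
    rw [hnu, one_mul, add_zero] at h
    rw [h]
    by_cases hj1 : (j:ℕ) + 1 < n + 1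
    · rw [dif_pos hj1, e1 0 (by omega) ((j:ℕ)+1) hj1]
      congr 1
    · rw [dif_neg hj1, e0 0 ((j:ℕ)+1) (by omega)]
  have hcolb : ∀ i : ℕ, i < n+1 → b i 0 = if i = 0 then 1 else 0 := by
    intro i hi
    rw [e1 i hi 0 (by omega)]
    have h0 : (⟨0, by omega⟩ : Fin (n+1)) = 0 := Fin.ext (by simp)
    rw [h0, hcol ⟨i, hi⟩]
    simp [nuVec]
  have htop : ∀ i : ℕ, i < n → b i n = 0 := by
    intro i hi
    have h := hrec i n hi (by omega)
    rw [e0 (i+1) (n+1) (by omega)] at h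
    exact h.symm
  have L1 : ∀ j i : ℕ, j ≤ i → i ≤ n → b i j = if i = j then 1 else 0 := by
    intro j
    induction j with
    | zero => intro i _ hi; simpa using hcolb i (by omega)
    | succ j ih =>
      intro i hji hi
      obtain ⟨i', rfl⟩ : ∃ i', i = i'+1 := ⟨i-1, by omega⟩
      rw [hrec i' j (by omega) (by omega), ih i' (by omega) (by omega)]
      simp
  have L2 : ∀ k m : ℕ, m + k ≤ n → b k (m+k) = b 0 m := by
    intro k
    induction k with
    | zero => intro m _; rfl
    | succ k ih =>
      intro m hmk
      have e : m + (k+1) = (m + k) + 1 := by omega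
      rw [e, hrec k (m+k) (by omega) (by omega), ih m (by omega)]
  have L3 : ∀ m : ℕ, 1 ≤ m → m ≤ n → b 0 m = 0 := by
    intro m h1 h2
    have h := L2 (n-m) m (by omega)
    rw [show m + (n-m) = n by omega] at h
    rw [← h, htop (n-m) (by omega)]
  have hBid : ∀ i j, B i j = if i = j then 1 else 0 := by
    intro i j
    rw [← e1 (i:ℕ) i.isLt (j:ℕ) j.isLt]
    rcases Nat.lt_or_ge (i:ℕ) (j:ℕ) with hij | hij
    · have h := L2 (i:ℕ) ((j:ℕ)-(i:ℕ)) (by omega)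
      rw [show (j:ℕ)-(i:ℕ) + (i:ℕ) = (j:ℕ) by omega] at h
      rw [h, L3 ((j:ℕ)-(i:ℕ)) (by omega) (by omega)]
      have hne : i ≠ j := by intro hh; rw [hh] at hij; omega
      simp [hne]
    · rw [L1 (j:ℕ) (i:ℕ) hij (by omega)]
      simp [Fin.ext_iff]
  refine ⟨hBid, ?_⟩
  intro j
  rw [hβb j]
  by_cases hj1 : (j:ℕ) + 1 < n + 1
  · exact L3 ((j:ℕ)+1) (by omega) (by omega)
  · rw [e0 0 ((j:ℕ)+1) (by omega)]

/-- if two matrices in normal form at `c` are conjugate under `G_r`,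
then the conjugating element is the identity. -/
theorem stmt1 (n d : ℕ) (hd : 1 ≤ d) (c : ℂ)
    (S S' : Matrix (Fin (n+2)) (Fin (n+2)) (Polynomial ℂ))
    (hS : Mrd n d S) (hS' : Mrd n d S')
    (hnf : NormalFormAt n c S) (hnf' : NormalFormAt n c S')
    (g : Matrix (Fin (n+2)) (Fin (n+2)) (Polynomial ℂ)) (hg : Gr n g)
    (hconj : g⁻¹ * S * g = S') :
    g = 1 ∧ S = S' := by
  obtain ⟨hg00, hgl, hgtop, hgB, hgdet⟩ := hg
  obtain ⟨hu, hT, hdT⟩ := hnf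
  obtain ⟨hu', hT', hdT'⟩ := hnf'
  have hgS' : S * g = g * S' := by
    rw [← hconj, ← Matrix.mul_assoc, ← Matrix.mul_assoc,
      Matrix.mul_nonsing_inv g hgdet, Matrix.one_mul]
  set Bc : Matrix (Fin (n+1)) (Fin (n+1)) ℂ :=
    Matrix.of fun i j => eval c (g i.succ j.succ) with hBcdef
  have hBc_eval : ∀ i j, Bc i j = (g i.succ j.succ).coeff 0 := by
    intro i j
    simp only [hBcdef, Matrix.of_apply]
    conv_lhs => rw [Polynomial.eq_C_of_degree_le_zero (hgB i j)]
    rw [eval_C]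
  have hBC : ∀ i j, g i.succ j.succ = C (Bc i j) := by
    intro i j
    rw [hBc_eval]
    exact Polynomial.eq_C_of_degree_le_zero (hgB i j)
  have expand : ∀ (A B : Matrix (Fin (n+2)) (Fin (n+2)) (Polynomial ℂ)) (a b : Fin (n+2)),
      (A * B) a b = A a 0 * B 0 b + ∑ k : Fin (n+1), A a k.succ * B k.succ b := by
    intro A B a b
    rw [Matrix.mul_apply, Fin.sum_univ_succ]
  -- entrywise polynomial identities
  have hPoly : ∀ i j : Fin (n+1),
      S i.succ 0 * g 0 j.succ + ∑ k : Fin (n+1), S i.succ k.succ * g k.succ j.succ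
        = ∑ k : Fin (n+1), g i.succ k.succ * S' k.succ j.succ := by
    intro i j
    have h := congrFun (congrFun hgS' i.succ) j.succ
    rw [expand S g i.succ j.succ, expand g S' i.succ j.succ] at h
    simp only [hgl, zero_mul, zero_add] at h
    exact h
  have hPoly0 : ∀ i : Fin (n+1),
      S i.succ 0 = ∑ k : Fin (n+1), g i.succ k.succ * S' k.succ 0 := by
    intro i
    have h := congrFun (congrFun hgS' i.succ) 0
    rw [expand S g i.succ 0, expand g S' i.succ 0] at h
    simp only [hgl, hg00, mul_one, mul_zero, zero_mul,
      Finset.sum_const_zero, add_zero, zero_add] at h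
    exact h
  -- evaluated facts
  have huS : ∀ i, eval c (S i.succ 0) = nuVec n i := hu
  have hu'S : ∀ i, eval c (S' i.succ 0) = nuVec n i := hu'
  have hTc : ∀ i k, eval c (S i.succ k.succ) = tauMat n i k := by
    intro i k
    have h := congrFun (congrFun hT i) k
    simpa [blkT, Matrix.map_apply] using h
  have hT'c : ∀ i k, eval c (S' i.succ k.succ) = tauMat n i k := by
    intro i k
    have h := congrFun (congrFun hT' i) k
    simpa [blkT, Matrix.map_apply] using h
  have h01 : (0:Fin (n+1)).succ = (1 : Fin (n+2)) := by
    apply Fin.ext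
    simp
  have hdTS : ∀ k : Fin (n+1), eval c (derivative (S 1 k.succ)) = 0 := by
    intro k
    rw [← h01]
    exact hdT k
  have hdT'S : ∀ k : Fin (n+1), eval c (derivative (S' 1 k.succ)) = 0 := by
    intro k
    rw [← h01]
    exact hdT' k
  have hEval : ∀ i j, nuVec n i * eval c (g 0 j.succ)
      + ∑ k, tauMat n i k * Bc k j = ∑ k, Bc i k * tauMat n k j := by
    intro i j
    have h := congrArg (eval c) (hPoly i j)
    simp only [eval_add, eval_mul, eval_finset_sum, huS, hTc, hT'c, hBC, eval_C] at h
    exact h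
  have hcolB : ∀ i, Bc i 0 = nuVec n i := by
    intro i
    have h := congrArg (eval c) (hPoly0 i)
    simp only [eval_finset_sum, eval_mul, huS, hu'S, hBC, eval_C] at h
    rw [h]
    rw [Finset.sum_eq_single (0 : Fin (n+1))]
    · simp [nuVec]
    · intro k _ hk
      have : (k:ℕ) ≠ 0 := fun hc => hk (Fin.ext (by simpa using hc))
      simp [nuVec, this]
    · simp
  obtain ⟨hBid, hβ0⟩ := key_combinatorial n Bc (fun j => eval c (g 0 j.succ)) hcolB hEval
  have hBC1 : ∀ k : Fin (n+1), g 1 k.succ = C (Bc 0 k) := by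
    intro k
    rw [← h01]
    exact hBC 0 k
  have huS1 : eval c (S 1 0) = 1 := by
    rw [← h01]
    rw [huS 0]
    simp [nuVec]
  -- derivative step
  have hβ1 : ∀ j : Fin (n+1), eval c (derivative (g 0 j.succ)) = 0 := by
    intro j
    have h := congrArg (fun p => eval c (derivative p)) (hPoly (0 : Fin (n+1)) j)
    simp only [hBC, derivative_add, derivative_mul, derivative_sum, derivative_C,
      eval_add, eval_mul, eval_finset_sum, eval_zero, eval_C, mul_zero, zero_mul,
      add_zero, zero_add, Fin.succ_zero_eq_one, hBC1, huS1, hdTS, hdT'S, hβ0, huS,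
      hBid] at h
    simpa [nuVec, hdTS, hdT'S, hBid] using h
  have hg0 : ∀ j : Fin (n+1), g 0 j.succ = 0 :=
    fun j => eq_zero_of_deg_le_one (hgtop j) c (hβ0 j) (hβ1 j)
  have hgid : g = 1 := by
    apply Matrix.ext
    intro a b
    refine Fin.cases ?_ (fun i => ?_) a
    · refine Fin.cases ?_ (fun j => ?_) b
      · rw [hg00]
        simp [Matrix.one_apply]
      · rw [hg0 j, Matrix.one_apply_ne (Ne.symm (Fin.succ_ne_zero j))]
    · refine Fin.cases ?_ (fun j => ?_) b
      · rw [hgl i, Matrix.one_apply_ne (Fin.succ_ne_zero i)]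
      · rw [hBC i j, hBid i j, Matrix.one_apply]
        by_cases hij : i = j
        · simp [hij]
        · have : i.succ ≠ j.succ := fun hc => hij (Fin.succ_injective _ hc)
          simp [hij, this]
  refine ⟨hgid, ?_⟩
  rw [hgid] at hconj
  simpa using hconj
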